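/- In the Set Cover metric construction, if OPT is the size of the minimum set cover of (U, F), then in any 1-navigable graph on the constructed metric, every root vertex r_ℓ has out-degree at least L·OPT. -/

import Mathlib

open scoped ENNReal

/-- Vertices of the Set Cover metric construction: `L` roots, and `L` gadgets each
with a vertex for each of the `m` sets and each of the `n` elements. -/
abbrev SCVertex (L m n : ℕ) := Sum (Fin L) (Fin L × (Sum (Fin m) (Fin n)))

/-- Edge weights of the Set Cover metric construction (`⊤` means no edge):
root–set weight `1`, set–set weight `1-γ` within a gadget, set–element weight `1`
for containment, root–element weight `2-γ`. -/
noncomputable def scWeight (L m n : ℕ) (mem : Fin n → Fin m → Prop)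
    [∀ j i, Decidable (mem j i)] (γ : ℝ) :
    SCVertex L m n → SCVertex L m n → ℝ≥0∞
  | Sum.inl _, Sum.inl _ => ⊤
  | Sum.inl _, Sum.inr (_, Sum.inl _) => 1
  | Sum.inr (_, Sum.inl _), Sum.inl _ => 1
  | Sum.inl _, Sum.inr (_, Sum.inr _) => ENNReal.ofReal (2 - γ)
  | Sum.inr (_, Sum.inr _), Sum.inl _ => ENNReal.ofReal (2 - γ)
  | Sum.inr (q, Sum.inl i), Sum.inr (q', Sum.inl i') =>
      if q = q' ∧ i ≠ i' then ENNReal.ofReal (1 - γ) else ⊤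
  | Sum.inr (q, Sum.inl i), Sum.inr (q', Sum.inr j) =>
      if q = q' ∧ mem j i then 1 else ⊤
  | Sum.inr (q, Sum.inr j), Sum.inr (q', Sum.inl i) =>
      if q = q' ∧ mem j i then 1 else ⊤
  | Sum.inr (_, Sum.inr _), Sum.inr (_, Sum.inr _) => ⊤

/-- Total weight of a walk given as the list of its vertices. -/
noncomputable def chainCost {V : Type*} (w : V → V → ℝ≥0∞) : List V → ℝ≥0∞
  | [] => 0
  | [_] => 0
  | a :: b :: rest => w a b + chainCost w (b :: rest)

/-- Shortest-path metric induced by the weights `w`. -/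
noncomputable def spDist {V : Type*} [DecidableEq V] (w : V → V → ℝ≥0∞) (u v : V) : ℝ≥0∞ :=
  if u = v then 0 else ⨅ l : List V, chainCost w (u :: (l ++ [v]))


section Aux

variable (L m n : ℕ) (mem : Fin n → Fin m → Prop) [∀ j i, Decidable (mem j i)] (γ : ℝ)

/-- Potential function witnessing lower bounds on distances to the element vertex
`(q, j)`. -/
noncomputable def scPhi (q : Fin L) (j : Fin n) : SCVertex L m n → ℝ≥0∞
  | Sum.inl _ => ENNReal.ofReal (2 - γ)
  | Sum.inr (q', Sum.inl i) => if q' = q ∧ mem j i then 1 else ENNReal.ofReal (2 - γ)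
  | Sum.inr (q', Sum.inr j') => if q' = q ∧ j' = j then 0 else 2

variable {γ}

lemma scPhi_lip (hγ0 : 0 < γ) (hγ1 : γ < 1) (q : Fin L) (j : Fin n)
    (v v' : SCVertex L m n) :
    scPhi L m n mem γ q j v ≤ scWeight L m n mem γ v v' + scPhi L m n mem γ q j v' := by
  have h2 : (0:ℝ) ≤ 2 - γ := by linarith
  have h1 : (0:ℝ) ≤ 1 - γ := by linarith
  have ha2 : ENNReal.ofReal (2 - γ) ≤ 2 := by
    calc ENNReal.ofReal (2 - γ) ≤ ENNReal.ofReal 2 :=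
          ENNReal.ofReal_le_ofReal (by linarith)
      _ = 2 := by norm_num
  have ha1 : (1:ℝ≥0∞) ≤ ENNReal.ofReal (2 - γ) :=
    ENNReal.one_le_ofReal.mpr (by linarith)
  have hba : ENNReal.ofReal (2 - γ) ≤ ENNReal.ofReal (1 - γ) + 1 := by
    rw [show (1:ℝ≥0∞) = ENNReal.ofReal 1 by norm_num,
      ← ENNReal.ofReal_add h1 zero_le_one]
    exact ENNReal.ofReal_le_ofReal (by linarith)
  have haa : (2:ℝ≥0∞) ≤ ENNReal.ofReal (2 - γ) + ENNReal.ofReal (2 - γ) := by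
    rw [← ENNReal.ofReal_add h2 h2, show (2:ℝ≥0∞) = ENNReal.ofReal 2 by norm_num]
    exact ENNReal.ofReal_le_ofReal (by linarith)
  have h2le11 : (2:ℝ≥0∞) ≤ 1 + 1 := by norm_num
  have h2le12 : (2:ℝ≥0∞) ≤ 1 + 2 := by norm_num
  have h2le1a : (2:ℝ≥0∞) ≤ 1 + ENNReal.ofReal (2 - γ) := by
    calc (2:ℝ≥0∞) = 1 + 1 := by norm_num
      _ ≤ 1 + ENNReal.ofReal (2 - γ) := add_le_add_right ha1 _
  rcases v with r | ⟨p, i | j'⟩ <;> rcases v' with r' | ⟨p', i' | j''⟩ <;>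
      simp only [scWeight, scPhi] <;> (try split_ifs) <;>
      (try simp only [top_add, add_zero]) <;>
      (try exact le_top) <;> (try exact zero_le _)
  all_goals
    first
    | exact le_refl _
    | exact hba
    | exact haa
    | exact self_le_add_left _ _
    | exact self_le_add_right _ _
    | exact le_trans ha1 (self_le_add_left _ _)
    | exact le_trans ha2 h2le11
    | exact le_trans ha2 h2le12
    | exact h2le11
    | exact h2le1a
    | simp_all

lemma scPhi_chain (hγ0 : 0 < γ) (hγ1 : γ < 1) (q : Fin L) (j : Fin n) :
    ∀ (l : List (SCVertex L m n)) (u : SCVertex L m n),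
      scPhi L m n mem γ q j u ≤
        chainCost (scWeight L m n mem γ) (u :: (l ++ [Sum.inr (q, Sum.inr j)])) := by
  have ht : scPhi L m n mem γ q j (Sum.inr (q, Sum.inr j)) = 0 := by
    simp [scPhi]
  intro l
  induction l with
  | nil =>
      intro u
      have h := scPhi_lip L m n mem hγ0 hγ1 q j u (Sum.inr (q, Sum.inr j))
      rw [ht, add_zero] at h
      simpa [chainCost] using h
  | cons b rest ih =>
      intro u
      have h := le_trans (scPhi_lip L m n mem hγ0 hγ1 q j u b)
        (add_le_add_right (ih b) (scWeight L m n mem γ u b))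
      simpa [chainCost] using h

lemma scPhi_le_spDist (hγ0 : 0 < γ) (hγ1 : γ < 1) (q : Fin L) (j : Fin n)
    (u : SCVertex L m n) :
    scPhi L m n mem γ q j u ≤ spDist (scWeight L m n mem γ) u (Sum.inr (q, Sum.inr j)) := by
  classical
  rw [spDist]
  split_ifs with h
  · subst h; simp [scPhi]
  · exact le_iInf fun l => scPhi_chain L m n mem hγ0 hγ1 q j l u

lemma spDist_root_le (hγ0 : 0 < γ) (ℓ q : Fin L) (j : Fin n) :
    spDist (scWeight L m n mem γ) (Sum.inl ℓ) (Sum.inr (q, Sum.inr j))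
      ≤ ENNReal.ofReal (2 - γ) := by
  classical
  rw [spDist, if_neg (by simp)]
  refine le_trans (iInf_le _ ([] : List (SCVertex L m n))) ?_
  simp [chainCost, scWeight]

lemma nbr_char (hγ0 : 0 < γ) (hγ1 : γ < 1) (q : Fin L) (j : Fin n)
    (u : SCVertex L m n)
    (h : spDist (scWeight L m n mem γ) u (Sum.inr (q, Sum.inr j))
        < ENNReal.ofReal (2 - γ)) :
    u = Sum.inr (q, Sum.inr j) ∨ ∃ i, mem j i ∧ u = Sum.inr (q, Sum.inl i) := by
  have hlow := scPhi_le_spDist L m n mem hγ0 hγ1 q j u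
  have hφ : scPhi L m n mem γ q j u < ENNReal.ofReal (2 - γ) := lt_of_le_of_lt hlow h
  have ha2 : ENNReal.ofReal (2 - γ) ≤ 2 := by
    calc ENNReal.ofReal (2 - γ) ≤ ENNReal.ofReal 2 :=
          ENNReal.ofReal_le_ofReal (by linarith)
      _ = 2 := by norm_num
  rcases u with r | ⟨p, i | j'⟩
  · exact absurd hφ (by simp [scPhi])
  · by_cases hpi : p = q ∧ mem j i
    · exact Or.inr ⟨i, hpi.2, by rw [hpi.1]⟩
    · exact absurd hφ (by simp [scPhi, hpi])
  · by_cases hpj : p = q ∧ j' = j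
    · exact Or.inl (by rw [hpj.1, hpj.2])
    · refine absurd hφ (not_lt.mpr ?_)
      simp only [scPhi, if_neg hpj]
      exact ha2

end Aux

/-- if `OPT` is the minimum cover size of the Set Cover instance, then
in any 1-navigable graph on the constructed metric every root vertex has
out-degree at least `L·OPT`. -/
theorem stmt7 (L m n OPT : ℕ) (γ : ℝ) (hγ0 : 0 < γ) (hγ1 : γ < 1) (hL : m + n ≤ L)
    (mem : Fin n → Fin m → Prop) [∀ j i, Decidable (mem j i)]
    (hOPT : IsLeast {k : ℕ | ∃ T : Finset (Fin m),
        (∀ j : Fin n, ∃ i ∈ T, mem j i) ∧ T.card = k} OPT)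
    (E : SCVertex L m n → SCVertex L m n → Prop)
    (hnav : ∀ s t : SCVertex L m n, s ≠ t →
      ∃ u, E s u ∧
        spDist (scWeight L m n mem γ) u t < spDist (scWeight L m n mem γ) s t) :
    ∀ ℓ : Fin L, L * OPT ≤ {u | E (Sum.inl ℓ) u}.ncard := by
  classical
  intro ℓ
  set s : SCVertex L m n := Sum.inl ℓ with hs
  obtain ⟨⟨T₀, hT₀cov, _⟩, hOPTle⟩ := hOPT
  have hcov : ∀ j : Fin n, ∃ i, mem j i := fun j => by
    obtain ⟨i, _, hi⟩ := hT₀cov j; exact ⟨i, hi⟩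
  choose c hc using hcov
  -- the neighborhood as a finset
  set N : Finset (SCVertex L m n) := Finset.univ.filter (fun u => E s u) with hN
  have hncard : {u | E s u}.ncard = N.card := by
    rw [hN]
    rw [Set.ncard_eq_toFinset_card']
    congr 1
    ext u
    simp
  rw [hncard]
  -- per-gadget neighborhoods
  set Nq : Fin L → Finset (SCVertex L m n) :=
    fun q => N.filter (fun u => ∃ x, u = Sum.inr (q, x)) with hNq
  have key : ∀ q : Fin L, OPT ≤ (Nq q).card := by
    intro q
    set Sq : Finset (Fin m) :=
      Finset.univ.filter (fun i => E s (Sum.inr (q, Sum.inl i))) with hSq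
    set Dq : Finset (Fin n) :=
      Finset.univ.filter (fun j => E s (Sum.inr (q, Sum.inr j))) with hDq
    -- Sq together with chosen covers of Dq is a set cover
    have hcover : ∀ j : Fin n, ∃ i ∈ Sq ∪ Dq.image c, mem j i := by
      intro j
      obtain ⟨u, hEu, hdu⟩ := hnav s (Sum.inr (q, Sum.inr j)) (by simp [hs])
      have hdu' : spDist (scWeight L m n mem γ) u (Sum.inr (q, Sum.inr j))
          < ENNReal.ofReal (2 - γ) :=
        lt_of_lt_of_le hdu (spDist_root_le L m n mem hγ0 ℓ q j)
      rcases nbr_char L m n mem hγ0 hγ1 q j u hdu' with h | ⟨i, hmi, hui⟩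
      · subst h
        refine ⟨c j, Finset.mem_union_right _ ?_, hc j⟩
        exact Finset.mem_image_of_mem c (by simp [hDq, hEu])
      · subst hui
        exact ⟨i, Finset.mem_union_left _ (by simp [hSq, hEu]), hmi⟩
    have hOPT_le : OPT ≤ (Sq ∪ Dq.image c).card :=
      hOPTle ⟨Sq ∪ Dq.image c, hcover, rfl⟩
    have hcard1 : (Sq ∪ Dq.image c).card ≤ Sq.card + Dq.card :=
      le_trans (Finset.card_union_le _ _)
        (Nat.add_le_add_left Finset.card_image_le _)
    -- embed Sq and Dq into Nq q
    have himg : (Sq.image (fun i => (Sum.inr (q, Sum.inl i) : SCVertex L m n))) ∪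
        (Dq.image (fun j => (Sum.inr (q, Sum.inr j) : SCVertex L m n))) ⊆ Nq q := by
      intro u hu
      rcases Finset.mem_union.mp hu with hu | hu
      · obtain ⟨i, hi, rfl⟩ := Finset.mem_image.mp hu
        simp only [hSq, Finset.mem_filter, Finset.mem_univ, true_and] at hi
        simp [hNq, hN, hi]
      · obtain ⟨j', hj', rfl⟩ := Finset.mem_image.mp hu
        simp only [hDq, Finset.mem_filter, Finset.mem_univ, true_and] at hj'
        simp [hNq, hN, hj']
    have hdisj : Disjoint (Sq.image (fun i => (Sum.inr (q, Sum.inl i) : SCVertex L m n)))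
        (Dq.image (fun j => (Sum.inr (q, Sum.inr j) : SCVertex L m n))) := by
      rw [Finset.disjoint_left]
      rintro u hu hu'
      obtain ⟨i, _, rfl⟩ := Finset.mem_image.mp hu
      obtain ⟨j', _, h⟩ := Finset.mem_image.mp hu'
      simp at h
    have hcard2 : Sq.card + Dq.card ≤ (Nq q).card := by
      rw [← Finset.card_image_of_injective Sq
          (fun a b hab => by simpa using hab : Function.Injective
            (fun i => (Sum.inr (q, Sum.inl i) : SCVertex L m n))),
        ← Finset.card_image_of_injective Dq
          (fun a b hab => by simpa using hab : Function.Injective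
            (fun j => (Sum.inr (q, Sum.inr j) : SCVertex L m n))),
        ← Finset.card_union_of_disjoint hdisj]
      exact Finset.card_le_card himg
    exact le_trans hOPT_le (le_trans hcard1 hcard2)
  -- sum over gadgets
  have hdisjNq : ∀ q ∈ Finset.univ, ∀ q' ∈ Finset.univ, q ≠ q' →
      Disjoint (Nq q) (Nq q') := by
    intro q _ q' _ hqq'
    rw [Finset.disjoint_left]
    rintro u hu hu'
    simp only [hNq, Finset.mem_filter] at hu hu'
    obtain ⟨x, rfl⟩ := hu.2
    obtain ⟨x', hx'⟩ := hu'.2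
    rw [Sum.inr.injEq, Prod.mk.injEq] at hx'
    exact hqq' hx'.1
  calc (L : ℕ) * OPT = ∑ _q : Fin L, OPT := by simp [Finset.sum_const, mul_comm]
    _ ≤ ∑ q : Fin L, (Nq q).card := Finset.sum_le_sum (fun q _ => key q)
    _ = (Finset.univ.biUnion Nq).card := (Finset.card_biUnion hdisjNq).symm
    _ ≤ N.card := Finset.card_le_card (Finset.biUnion_subset.mpr
        (fun q _ => Finset.filter_subset _ _))
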